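/- Let G be the complete graph on q ≥ 2 vertices with pairwise distinct positive edge weights and let T be its (unique) maximum spanning tree. For every ε ≥ 0, the cycle rank of the threshold graph G_ε satisfies β₁(ε) = #{edges of G not in T with weight > ε}, where β₁(ε) = E(ε) − q + β₀(ε), E(ε) is the number of edges of G_ε and β₀(ε) its number of connected components. -/

import Mathlib

/-- The threshold graph of a weighted graph `H`: keep only edges of `H` whose
weight strictly exceeds `ε`. -/
def thresholdOf {q : ℕ} (H : SimpleGraph (Fin q)) (w : Sym2 (Fin q) → ℝ) (ε : ℝ) :
    SimpleGraph (Fin q) where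
  Adj i j := H.Adj i j ∧ ε < w s(i, j)
  symm := ⟨fun i j h => ⟨h.1.symm, by rw [Sym2.eq_swap]; exact h.2⟩⟩
  loopless := ⟨fun i h => H.loopless.irrefl i h.1⟩

/-- The threshold graph of the complete weighted graph on `Fin q`. -/
def thresholdGraph {q : ℕ} (w : Sym2 (Fin q) → ℝ) (ε : ℝ) : SimpleGraph (Fin q) :=
  thresholdOf ⊤ w ε

/-- `β₀(ε)`: the number of connected components of the threshold graph. -/
noncomputable def betti0 {q : ℕ} (w : Sym2 (Fin q) → ℝ) (ε : ℝ) : ℕ :=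
  Nat.card (thresholdGraph w ε).ConnectedComponent

/-- `E(ε)`: the number of edges of the threshold graph. -/
noncomputable def numEdges {q : ℕ} (w : Sym2 (Fin q) → ℝ) (ε : ℝ) : ℕ :=
  (thresholdGraph w ε).edgeSet.ncard

/-- `β₁(ε) = E(ε) − q + β₀(ε)`: the cycle rank of the threshold graph. -/
noncomputable def betti1 {q : ℕ} (w : Sym2 (Fin q) → ℝ) (ε : ℝ) : ℤ :=
  (numEdges w ε : ℤ) - (q : ℤ) + (betti0 w ε : ℤ)

/-- A point `ε` is a jump point of `f` if `f` is not constant on any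
neighborhood of `ε`. -/
def IsJump {β : Type*} (f : ℝ → β) (ε : ℝ) : Prop :=
  ∀ δ > 0, ∃ x : ℝ, |x - ε| < δ ∧ f x ≠ f ε

/-- `T` is a maximum spanning tree of `G` w.r.t. the weights `w`: a spanning tree
of `G` whose total edge weight is maximal among all spanning trees of `G`. -/
def IsMaxSpanningTree {V : Type*} (G : SimpleGraph V) (w : Sym2 V → ℝ)
    (T : SimpleGraph V) : Prop :=
  T ≤ G ∧ T.IsTree ∧
    ∀ T' : SimpleGraph V, T' ≤ G → T'.IsTree →
      (∑ᶠ e ∈ T'.edgeSet, w e) ≤ ∑ᶠ e ∈ T.edgeSet, w e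

open SimpleGraph

section Auxiliary

variable {V : Type*}

/-- Lift reachability along a map that sends adjacency to reachability. -/
lemma aux_reachable_of_adj_imp {G H : SimpleGraph V}
    (h : ∀ x y : V, G.Adj x y → H.Reachable x y) {x y : V} (hr : G.Reachable x y) :
    H.Reachable x y := by
  obtain ⟨p⟩ := hr
  induction p with
  | nil => exact Reachable.refl _
  | cons ha _ ih => exact (h _ _ ha).trans ih

/-- Dichotomy: a walk in `G`, after deleting the edge `s(a,b)`, either survives or
splits at this edge. -/
lemma aux_reachable_delete_dichotomy (G : SimpleGraph V) (a b : V) {x y : V}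
    (p : G.Walk x y) :
    (G.deleteEdges {s(a,b)}).Reachable x y ∨
    ((G.deleteEdges {s(a,b)}).Reachable x a ∧ (G.deleteEdges {s(a,b)}).Reachable b y) ∨
    ((G.deleteEdges {s(a,b)}).Reachable x b ∧ (G.deleteEdges {s(a,b)}).Reachable a y) := by
  induction p with
  | nil => exact Or.inl (Reachable.refl _)
  | @cons x c y ha p ih =>
    by_cases he : s(x, c) = s(a, b)
    · rw [Sym2.eq_iff] at he
      rcases he with ⟨hx, hc⟩ | ⟨hx, hc⟩
      · subst hx; subst hc
        rcases ih with h | ⟨_, h2⟩ | ⟨_, h2⟩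
        · exact Or.inr (Or.inl ⟨Reachable.refl _, h⟩)
        · exact Or.inr (Or.inl ⟨Reachable.refl _, h2⟩)
        · exact Or.inl h2
      · subst hx; subst hc
        rcases ih with h | ⟨_, h2⟩ | ⟨h1, h2⟩
        · exact Or.inr (Or.inr ⟨Reachable.refl _, h⟩)
        · exact Or.inl h2
        · exact Or.inl (h1.symm.trans h2)
    · have ha' : (G.deleteEdges {s(a,b)}).Adj x c := by
        rw [deleteEdges_adj]
        exact ⟨ha, by simpa using he⟩
      rcases ih with h | ⟨h1, h2⟩ | ⟨h1, h2⟩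
      · exact Or.inl (ha'.reachable.trans h)
      · exact Or.inr (Or.inl ⟨ha'.reachable.trans h1, h2⟩)
      · exact Or.inr (Or.inr ⟨ha'.reachable.trans h1, h2⟩)

lemma aux_isAcyclic_anti {G H : SimpleGraph V} (hle : H ≤ G) (hG : G.IsAcyclic) :
    H.IsAcyclic :=
  fun _ c hc => hG (c.mapLe hle) (hc.mapLe hle)

/-- Walk avoiding the deleted edge when its component avoids `a`. -/
lemma aux_reachable_delete_of_ne_component (G : SimpleGraph V) {a b x y : V}
    (hr : G.Reachable x y) (hx : ¬ G.Reachable x a) :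
    (G.deleteEdges {s(a,b)}).Reachable x y := by
  classical
  obtain ⟨p⟩ := hr
  have hne : ∀ e ∈ p.edges, e ∉ ({s(a,b)} : Set (Sym2 V)) := by
    intro e hep hmem
    rw [Set.mem_singleton_iff] at hmem
    subst hmem
    have ha : a ∈ p.support := p.fst_mem_support_of_mem_edges hep
    exact hx ⟨p.takeUntil a ha⟩
  exact ⟨p.toDeleteEdges _ hne⟩

/-- Deleting a bridge edge increases the number of connected components by one. -/
lemma aux_card_cc_deleteEdge [Fintype V] (G : SimpleGraph V) {a b : V} (hab : G.Adj a b)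
    (hbr : ¬ (G.deleteEdges {s(a,b)}).Reachable a b) :
    Nat.card (G.deleteEdges {s(a,b)}).ConnectedComponent
      = Nat.card G.ConnectedComponent + 1 := by
  classical
  set G' := G.deleteEdges {s(a,b)} with hG'def
  have hle : G' ≤ G := deleteEdges_le _
  set φ : G'.ConnectedComponent → G.ConnectedComponent :=
    ConnectedComponent.map (Hom.ofLE hle) with hφdef
  have hφ : ∀ x : V, φ (G'.connectedComponentMk x) = G.connectedComponentMk x :=
    fun x => rfl
  set c₀ : G.ConnectedComponent := G.connectedComponentMk a with hc₀
  have key : ∀ c : G.ConnectedComponent,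
      (Finset.univ.filter fun d => φ d = c).card = if c = c₀ then 2 else 1 := by
    refine SimpleGraph.ConnectedComponent.ind fun x => ?_
    by_cases hc : G.connectedComponentMk x = c₀
    · rw [hc, if_pos rfl]
      rw [Finset.card_eq_two]
      refine ⟨G'.connectedComponentMk a, G'.connectedComponentMk b, ?_, ?_⟩
      · intro h
        exact hbr (ConnectedComponent.exact h)
      · ext d
        simp only [Finset.mem_filter, Finset.mem_univ, true_and, Finset.mem_insert,
          Finset.mem_singleton]
        constructor
        · refine SimpleGraph.ConnectedComponent.ind (fun z hd => ?_) d
          have hz : G.connectedComponentMk z = c₀ := by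
            rw [← hφ z, hd]
          have hreach : G.Reachable z a := ConnectedComponent.exact hz
          obtain ⟨p⟩ := hreach
          rcases aux_reachable_delete_dichotomy G a b p with h | ⟨h1, _⟩ | ⟨h1, _⟩
          · exact Or.inl (ConnectedComponent.sound h)
          · exact Or.inl (ConnectedComponent.sound h1)
          · exact Or.inr (ConnectedComponent.sound h1)
        · rintro (rfl | rfl)
          · rw [hφ, hc₀]
          · rw [hφ, hc₀]
            exact ConnectedComponent.sound hab.reachable.symm
    · rw [if_neg hc]
      rw [Finset.card_eq_one]
      refine ⟨G'.connectedComponentMk x, ?_⟩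
      ext d
      simp only [Finset.mem_filter, Finset.mem_univ, true_and, Finset.mem_singleton]
      constructor
      · refine SimpleGraph.ConnectedComponent.ind (fun z hd => ?_) d
        have hz : G.Reachable z x := ConnectedComponent.exact (by rw [← hφ z, hd])
        have hx : ¬ G.Reachable z a := by
          intro hza
          exact hc (ConnectedComponent.sound (hza.symm.trans hz)).symm
        exact ConnectedComponent.sound (aux_reachable_delete_of_ne_component G hz hx)
      · rintro rfl
        exact hφ x
  have hsum : Fintype.card G'.ConnectedComponent
      = ∑ c : G.ConnectedComponent, (Finset.univ.filter fun d => φ d = c).card := by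
    rw [← Finset.card_univ]
    exact Finset.card_eq_sum_card_fiberwise (fun d _ => Finset.mem_univ (φ d))
  have hmain : Fintype.card G'.ConnectedComponent
      = Fintype.card G.ConnectedComponent + 1 := by
    rw [hsum]
    have hthis : ∀ c : G.ConnectedComponent,
        (Finset.univ.filter fun d => φ d = c).card
          = 1 + (if c = c₀ then 1 else 0) := by
      intro c; rw [key c]; split_ifs <;> rfl
    rw [Finset.sum_congr rfl fun c _ => hthis c, Finset.sum_add_distrib]
    simp [Finset.card_univ]
  simpa [Nat.card_eq_fintype_card] using hmain

/-- Number of connected components of a forest. -/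
lemma aux_forest_card [Fintype V] (n : ℕ) :
    ∀ G : SimpleGraph V, G.IsAcyclic → G.edgeSet.ncard = n →
      Nat.card G.ConnectedComponent + n = Fintype.card V := by
  induction n with
  | zero =>
    intro G _ hcard
    rw [Set.ncard_eq_zero (G.edgeSet.toFinite)] at hcard
    rw [edgeSet_eq_empty] at hcard
    subst hcard
    rw [Nat.add_zero, ← Nat.card_eq_fintype_card]
    refine Nat.card_congr ⟨ConnectedComponent.lift id ?_,
      (⊥ : SimpleGraph V).connectedComponentMk,
      SimpleGraph.ConnectedComponent.ind fun v => rfl, fun v => rfl⟩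
    intro v w' p _
    cases p with
    | nil => rfl
    | cons h _ => exact h.elim
  | succ n ih =>
    intro G hac hcard
    have hne : G.edgeSet.Nonempty := by
      rw [← Set.ncard_pos G.edgeSet.toFinite, hcard]; omega
    obtain ⟨e, he⟩ := hne
    revert he
    refine Sym2.ind (fun a b he => ?_) e
    have hab : G.Adj a b := he
    have hbr : G.IsBridge s(a, b) := by
      have h := hac
      rw [isAcyclic_iff_forall_adj_isBridge] at h
      exact h hab
    rw [isBridge_iff] at hbr
    have hbr' : ¬ (G.deleteEdges {s(a,b)}).Reachable a b := hbr
    have hG'card : (G.deleteEdges {s(a,b)}).edgeSet.ncard = n := by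
      rw [edgeSet_deleteEdges]
      rw [Set.ncard_diff_singleton_of_mem he, hcard]
      omega
    have hG'ac : (G.deleteEdges {s(a,b)}).IsAcyclic :=
      aux_isAcyclic_anti (deleteEdges_le _) hac
    have hih := ih (G.deleteEdges {s(a,b)}) hG'ac hG'card
    rw [aux_card_cc_deleteEdge G hab hbr'] at hih
    omega

end Auxiliary

/-- The cycle/exchange property of a maximum spanning tree: every edge on the tree
path between the endpoints of a non-tree edge is strictly heavier. -/
lemma aux_exchange {q : ℕ} (hq : 2 ≤ q) (w : Sym2 (Fin q) → ℝ)
    (hinj : ∀ e f : Sym2 (Fin q), ¬ e.IsDiag → ¬ f.IsDiag → w e = w f → e = f)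
    (T : SimpleGraph (Fin q)) (hT : IsMaxSpanningTree ⊤ w T) {u v : Fin q}
    (huv : u ≠ v) (he : s(u,v) ∉ T.edgeSet) (p : T.Walk u v) (hp : p.IsPath) :
    ∀ f ∈ p.edges, w s(u,v) < w f := by
  classical
  have htree : T.IsTree := hT.2.1
  intro f
  induction f using Sym2.ind with
  | _ a b =>
  intro hf
  have hab : T.Adj a b := p.adj_of_mem_edges hf
  have hfT : s(a,b) ∈ T.edgeSet := hab
  have hfe : s(a,b) ≠ s(u,v) := fun h => he (h ▸ hfT)
  set D := T.deleteEdges {s(a,b)} with hDdef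
  have hDle : D ≤ T := deleteEdges_le _
  have hDedge : D.edgeSet = T.edgeSet \ {s(a,b)} := edgeSet_deleteEdges _
  have hDuv : ¬ D.Reachable u v := by
    rintro ⟨q0⟩
    obtain ⟨r, hrp⟩ := q0.toPath
    have hrT : (r.mapLe hDle).IsPath := (Walk.mapLe_isPath hDle).mpr hrp
    obtain ⟨P0, hP0, huniq⟩ := htree.existsUnique_path u v
    have h1 : r.mapLe hDle = P0 := huniq _ hrT
    have h2 : p = P0 := huniq _ hp
    have hmem : s(a,b) ∈ (r.mapLe hDle).edges := by rw [h1, ← h2]; exact hf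
    have hmem' : s(a,b) ∈ r.edges := by
      simpa [Walk.edges_map, List.mem_map, Hom.ofLE_apply,
        Sym2.map_id'] using hmem
    have hsub := r.edges_subset_edgeSet hmem'
    rw [hDedge] at hsub
    exact hsub.2 rfl
  have hside : ∀ x : Fin q, D.Reachable x a ∨ D.Reachable x b := by
    intro x
    obtain ⟨pw⟩ := htree.isConnected.preconnected x a
    rcases aux_reachable_delete_dichotomy T a b pw with h | ⟨h1, _⟩ | ⟨h1, _⟩
    · exact Or.inl h
    · exact Or.inl h1
    · exact Or.inr h1
  have hsplit : (D.Reachable u a ∧ D.Reachable v b) ∨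
      (D.Reachable u b ∧ D.Reachable v a) := by
    rcases hside u with hu | hu <;> rcases hside v with hv | hv
    · exact absurd (hu.trans hv.symm) hDuv
    · exact Or.inl ⟨hu, hv⟩
    · exact Or.inr ⟨hu, hv⟩
    · exact absurd (hu.trans hv.symm) hDuv
  set T' := D ⊔ edge u v with hT'def
  have hT'adj : T'.Adj u v := by
    rw [hT'def, sup_adj, edge_adj]
    exact Or.inr ⟨Or.inl ⟨rfl, rfl⟩, huv⟩
  have hDleT' : D ≤ T' := le_sup_left
  have hT'conn : T'.Connected := by
    have hreachu : ∀ x : Fin q, T'.Reachable x u := by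
      intro x
      rcases hsplit with ⟨hua, hvb⟩ | ⟨hub, hva⟩
      · rcases hside x with hx | hx
        · exact (hx.trans hua.symm).mono hDleT'
        · exact ((hx.trans hvb.symm).mono hDleT').trans hT'adj.symm.reachable
      · rcases hside x with hx | hx
        · exact ((hx.trans hva.symm).mono hDleT').trans hT'adj.symm.reachable
        · exact (hx.trans hub.symm).mono hDleT'
    have hne : Nonempty (Fin q) := ⟨⟨0, by omega⟩⟩
    rw [connected_iff]
    exact ⟨fun x y => (hreachu x).trans (hreachu y).symm, hne⟩
  have hedgeuv : (edge u v).edgeSet = {s(u,v)} := edge_edgeSet_of_ne huv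
  have hT'edge : T'.edgeSet = (T.edgeSet \ {s(a,b)}) ∪ {s(u,v)} := by
    rw [hT'def, edgeSet_sup, hDedge, hedgeuv]
  have hT'del : T' \ fromEdgeSet {s(u,v)} = D := by
    have hrfl : T' \ fromEdgeSet {s(u,v)} = T'.deleteEdges {s(u,v)} := rfl
    rw [hrfl, ← edgeSet_inj, edgeSet_deleteEdges, hT'edge, hDedge]
    ext e'
    simp only [Set.mem_diff, Set.mem_union, Set.mem_singleton_iff]
    constructor
    · rintro ⟨h1 | h1, h2⟩
      · exact h1
      · exact absurd h1 h2
    · rintro ⟨h1, h2⟩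
      exact ⟨Or.inl ⟨h1, h2⟩, fun hcon => he (hcon ▸ h1)⟩
  have hbridge : T'.IsBridge s(u,v) := by
    rw [isBridge_iff]
    change ¬ (T' \ fromEdgeSet {s(u,v)}).Reachable u v
    rw [hT'del]; exact hDuv
  have hT'ac : T'.IsAcyclic := by
    intro x c hc
    by_cases hce : s(u,v) ∈ c.edges
    · rw [isBridge_iff_mem_and_forall_cycle_notMem hT'adj] at hbridge
      exact hbridge c hc hce
    · have hsub : ∀ e' ∈ c.edges, e' ∈ T.edgeSet := by
        intro e' he'
        have hmem := c.edges_subset_edgeSet he'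
        rw [hT'edge] at hmem
        rcases hmem with h1 | h1
        · exact h1.1
        · exact absurd ((Set.mem_singleton_iff.mp h1) ▸ he') hce
      exact htree.IsAcyclic (c.transfer T hsub) (hc.transfer hsub)
  have hT'tree : T'.IsTree := ⟨hT'conn, hT'ac⟩
  have hsum := hT.2.2 T' le_top hT'tree
  have hfin : T.edgeSet.Finite := T.edgeSet.toFinite
  set F := hfin.toFinset with hFdef
  have hFcoe : (F : Set (Sym2 (Fin q))) = T.edgeSet := hfin.coe_toFinset
  have hfmem : s(a,b) ∈ F := by rw [hFdef, Set.Finite.mem_toFinset]; exact hfT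
  have hemem : s(u,v) ∉ F := by rw [hFdef, Set.Finite.mem_toFinset]; exact he
  have hTsum : ∑ᶠ e' ∈ T.edgeSet, w e' = ∑ e' ∈ F, w e' := by
    rw [← hFcoe, finsum_mem_coe_finset]
  have hT'sum : ∑ᶠ e' ∈ T'.edgeSet, w e'
      = w s(u,v) + ((∑ e' ∈ F, w e') - w s(a,b)) := by
    have hset : T'.edgeSet = ((insert (s(u,v)) (F.erase (s(a,b)))
        : Finset (Sym2 (Fin q))) : Set (Sym2 (Fin q))) := by
      rw [Finset.coe_insert, Finset.coe_erase, hFcoe, hT'edge, Set.union_singleton]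
    rw [hset, finsum_mem_coe_finset,
      Finset.sum_insert (fun h => hemem (Finset.mem_of_mem_erase h))]
    have h3 : w s(a,b) + ∑ e' ∈ F.erase (s(a,b)), w e' = ∑ e' ∈ F, w e' :=
      Finset.add_sum_erase F w hfmem
    linarith
  rw [hT'sum, hTsum] at hsum
  have hle : w s(u,v) ≤ w s(a,b) := by linarith
  have hwne : w s(u,v) ≠ w s(a,b) := by
    intro heq
    have hdiag1 : ¬ (s(u,v) : Sym2 (Fin q)).IsDiag := by
      rw [Sym2.mk_isDiag_iff]; exact huv
    have hdiag2 : ¬ (s(a,b) : Sym2 (Fin q)).IsDiag := by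
      rw [Sym2.mk_isDiag_iff]; exact hab.ne
    exact hfe (hinj _ _ hdiag1 hdiag2 heq).symm
  exact lt_of_le_of_ne hle hwne

lemma aux_mem_thresholdOf_edgeSet {q : ℕ} (H : SimpleGraph (Fin q))
    (w : Sym2 (Fin q) → ℝ) (ε : ℝ) (e : Sym2 (Fin q)) :
    e ∈ (thresholdOf H w ε).edgeSet ↔ e ∈ H.edgeSet ∧ ε < w e := by
  induction e using Sym2.ind with
  | _ x y =>
    rw [mem_edgeSet, mem_edgeSet]
    exact Iff.rfl

/-- **Betti-1 counts the non-tree edges above threshold.** For the complete graph on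
`q ≥ 2` vertices with pairwise distinct positive edge weights and maximum spanning
tree `T`, for every `ε ≥ 0` the cycle rank `β₁(ε) = E(ε) − q + β₀(ε)` of the
threshold graph equals the number of edges of the complete graph outside `T` whose
weight exceeds `ε`. -/
theorem betti1_eq_non_mst_edges (q : ℕ) (hq : 2 ≤ q) (w : Sym2 (Fin q) → ℝ)
    (hpos : ∀ e : Sym2 (Fin q), ¬ e.IsDiag → 0 < w e)
    (hinj : ∀ e f : Sym2 (Fin q), ¬ e.IsDiag → ¬ f.IsDiag → w e = w f → e = f)
    (T : SimpleGraph (Fin q)) (hT : IsMaxSpanningTree ⊤ w T) :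
    ∀ ε : ℝ, 0 ≤ ε →
      betti1 w ε =
        ({e : Sym2 (Fin q) | ¬ e.IsDiag ∧ e ∉ T.edgeSet ∧ ε < w e}.ncard : ℤ) := by
  intro ε hε
  classical
  set Gε := thresholdGraph w ε with hGεdef
  set Tε := thresholdOf T w ε with hTεdef
  have hGεthr : Gε = thresholdOf ⊤ w ε := rfl
  set M : Set (Sym2 (Fin q)) := {e | ¬ e.IsDiag ∧ e ∉ T.edgeSet ∧ ε < w e} with hMdef
  have hTεle : Tε ≤ Gε := by
    intro x y h
    exact ⟨h.1.ne, h.2⟩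
  -- the two graphs have the same reachability relation
  have hiff : ∀ x y : Fin q, Gε.Reachable x y ↔ Tε.Reachable x y := by
    intro x y
    constructor
    · refine aux_reachable_of_adj_imp (fun x y hxy => ?_)
      have hne : x ≠ y := hxy.1
      have hw : ε < w s(x,y) := hxy.2
      by_cases hst : s(x,y) ∈ T.edgeSet
      · exact (show Tε.Adj x y from ⟨hst, hw⟩).reachable
      · obtain ⟨P0, hP0, _⟩ := hT.2.1.existsUnique_path x y
        have hkey := aux_exchange hq w hinj T hT hne hst P0 hP0
        have hsub : ∀ e' ∈ P0.edges, e' ∈ Tε.edgeSet := by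
          intro e' he'
          rw [aux_mem_thresholdOf_edgeSet]
          exact ⟨P0.edges_subset_edgeSet he', hw.trans (hkey e' he')⟩
        exact ⟨P0.transfer Tε hsub⟩
    · exact Reachable.mono hTεle
  have hcc : Nat.card Gε.ConnectedComponent = Nat.card Tε.ConnectedComponent :=
    Nat.card_congr (Quot.congrRight hiff)
  -- Tε is a forest
  have hTεleT : Tε ≤ T := fun x y h => h.1
  have hTεac : Tε.IsAcyclic := aux_isAcyclic_anti hTεleT hT.2.1.IsAcyclic
  have hforest := aux_forest_card (Tε.edgeSet.ncard) Tε hTεac rfl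
  rw [Fintype.card_fin] at hforest
  -- edge partition
  have hGedge : Gε.edgeSet = Tε.edgeSet ∪ M := by
    ext e
    rw [hGεthr, aux_mem_thresholdOf_edgeSet, Set.mem_union, aux_mem_thresholdOf_edgeSet,
      edgeSet_top, Set.mem_setOf_eq]
    constructor
    · rintro ⟨hd, hw⟩
      by_cases hm : e ∈ T.edgeSet
      · exact Or.inl ⟨hm, hw⟩
      · exact Or.inr ⟨hd, hm, hw⟩
    · rintro (⟨hm, hw⟩ | ⟨hd, hm, hw⟩)
      · exact ⟨T.not_isDiag_of_mem_edgeSet hm, hw⟩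
      · exact ⟨hd, hw⟩
  have hdisj : Disjoint Tε.edgeSet M := by
    rw [Set.disjoint_left]
    intro e heT heM
    rw [aux_mem_thresholdOf_edgeSet] at heT
    exact heM.2.1 heT.1
  have hcardE : Gε.edgeSet.ncard = Tε.edgeSet.ncard + M.ncard := by
    rw [hGedge, Set.ncard_union_eq hdisj Tε.edgeSet.toFinite M.toFinite]
  -- assemble
  rw [betti1, numEdges, betti0, ← hGεdef]
  rw [hcc]
  rw [hcardE]
  omega
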